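/- Let a, b, m be positive integers with 1 ≤ a < b ≤ m and (a, b) ≠ (1, 2), and let x ≥ 1, y ≥ 0 be reals. Then all Taylor coefficients about q = 0 of f(q) = (1 − q^{b−a}) · ∏_{j≥1} (1 + y q^j)/(1 − x q^j) · ∏_{j≥0} (1 − x q^{a+jm})(1 − x q^{b+jm}) / ((1 + y q^{a+jm})(1 + y q^{b+jm})) are non-negative. -/

import Mathlib

open PowerSeries

namespace CoeffsNonnegFAux

noncomputable def vv (x : ℝ) (e : ℕ) : PowerSeries ℝ := 1 - C (R := ℝ) x * X ^ e
noncomputable def uu (y : ℝ) (e : ℕ) : PowerSeries ℝ := 1 + C (R := ℝ) y * X ^ e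
noncomputable def geo (x : ℝ) (e : ℕ) : PowerSeries ℝ :=
  PowerSeries.mk fun n => if e ∣ n then x ^ (n / e) else 0

lemma constantCoeff_vv (x : ℝ) {e : ℕ} (he : 0 < e) : constantCoeff (R := ℝ) (vv x e) = 1 := by
  simp [vv, zero_pow he.ne']

lemma constantCoeff_uu (y : ℝ) {e : ℕ} (he : 0 < e) : constantCoeff (R := ℝ) (uu y e) = 1 := by
  simp [uu, zero_pow he.ne']

lemma geo_mul_vv (x : ℝ) {e : ℕ} (he : 0 < e) : geo x e * vv x e = 1 := by
  have hrw : geo x e * vv x e = geo x e - C (R := ℝ) x * (geo x e * X ^ e) := by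
    unfold vv; ring
  ext n
  rw [hrw, map_sub, coeff_C_mul, coeff_mul_X_pow', coeff_one]
  rcases Nat.eq_zero_or_pos n with hn | hn
  · subst hn
    simp [geo, Nat.not_le.mpr he]
  · rw [if_neg hn.ne']
    by_cases hdvd : e ∣ n
    · have hen : e ≤ n := Nat.le_of_dvd hn hdvd
      obtain ⟨k, hk⟩ := hdvd
      match k, hk with
      | 0, hk => omega
      | k + 1, hk =>
        have h1 : n - e = e * k := by
          rw [hk, Nat.mul_succ, Nat.add_sub_cancel]
        have h2 : n / e = k + 1 := by rw [hk, Nat.mul_div_cancel_left _ he]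
        have h3 : (n - e) / e = k := by rw [h1, Nat.mul_div_cancel_left _ he]
        have hd1 : e ∣ n := ⟨k + 1, hk⟩
        have hd2 : e ∣ n - e := ⟨k, h1⟩
        simp only [geo, coeff_mk]
        rw [if_pos hd1, if_pos hen, if_pos hd2, h2, h3, pow_succ]
        ring
    · simp only [geo, coeff_mk, if_neg hdvd]
      rcases le_or_gt e n with hle | hlt
      · rw [if_pos hle, if_neg (fun h => hdvd (by
          have h2 := Nat.dvd_add h (dvd_refl e)
          rwa [Nat.sub_add_cancel hle] at h2))]
        ring
      · rw [if_neg (not_le.mpr hlt)]; ring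

lemma vv_inv (x : ℝ) {e : ℕ} (he : 0 < e) : (vv x e)⁻¹ = geo x e :=
  ((PowerSeries.eq_inv_iff_mul_eq_one
    (by rw [constantCoeff_vv x he]; exact one_ne_zero)).mpr (geo_mul_vv x he)).symm

def NN (f : PowerSeries ℝ) : Prop := ∀ n, 0 ≤ coeff (R := ℝ) n f

lemma NN.mul {f g : PowerSeries ℝ} (hf : NN f) (hg : NN g) : NN (f * g) := fun n => by
  rw [coeff_mul]
  exact Finset.sum_nonneg fun p _ => mul_nonneg (hf p.1) (hg p.2)

lemma NN_one : NN 1 := fun n => by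
  rw [coeff_one]; split_ifs <;> norm_num

lemma NN_uu {y : ℝ} (hy : 0 ≤ y) (e : ℕ) : NN (uu y e) := fun n => by
  rw [uu, map_add, coeff_one, coeff_C_mul, coeff_X_pow]
  split_ifs <;> nlinarith

lemma NN_geo {x : ℝ} (hx : 0 ≤ x) (e : ℕ) : NN (geo x e) := fun n => by
  rw [geo, coeff_mk]
  split_ifs
  exacts [pow_nonneg hx _, le_refl 0]

lemma NN_vv_inv {x : ℝ} (hx : 0 ≤ x) {e : ℕ} (he : 0 < e) : NN (vv x e)⁻¹ := by
  rw [vv_inv x he]; exact NN_geo hx e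

lemma NN_key {x : ℝ} (hx : 1 ≤ x) {c d : ℕ} (hc : 0 < c) (hcd : c ∣ d) :
    NN ((1 - X ^ d) * (vv x c)⁻¹) := by
  rw [vv_inv x hc]
  intro n
  have hrw : (1 - X ^ d) * geo x c = geo x c - geo x c * X ^ d := by ring
  rw [hrw, map_sub, coeff_mul_X_pow']
  simp only [geo, coeff_mk]
  have hx0 : (0:ℝ) ≤ x := le_trans zero_le_one hx
  by_cases hdn : d ≤ n
  · rw [if_pos hdn]
    by_cases hcn : c ∣ n
    · rw [if_pos hcn, if_pos (Nat.dvd_sub hcn hcd)]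
      have hle : (n - d) / c ≤ n / c := Nat.div_le_div_right (Nat.sub_le n d)
      have := pow_le_pow_right₀ hx hle
      linarith
    · rw [if_neg hcn, if_neg (fun h => hcn (by
        have h2 := Nat.dvd_add h hcd
        rwa [Nat.sub_add_cancel hdn] at h2))]
      norm_num
  · rw [if_neg hdn, sub_zero]
    split_ifs
    exacts [pow_nonneg hx0 _, le_refl 0]

lemma dvd_sub_one_mul {M : ℕ} {f g : PowerSeries ℝ}
    (hf : X ^ M ∣ f - 1) (hg : X ^ M ∣ g - 1) : X ^ M ∣ f * g - 1 := by
  have h : f * g - 1 = f * (g - 1) + (f - 1) := by ring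
  rw [h]
  exact dvd_add (hg.mul_left f) hf

lemma dvd_sub_one_inv {M : ℕ} {f : PowerSeries ℝ} (hf : X ^ M ∣ f - 1)
    (hc : constantCoeff (R := ℝ) f ≠ 0) : X ^ M ∣ f⁻¹ - 1 := by
  have h1 : f⁻¹ - 1 = -(f⁻¹ * (f - 1)) := by
    rw [mul_sub, mul_one, PowerSeries.inv_mul_cancel f hc]; ring
  rw [h1]
  exact dvd_neg.mpr (hf.mul_left _)

lemma dvd_sub_one_prod {M : ℕ} {s : Finset ℕ} {F : ℕ → PowerSeries ℝ}
    (h : ∀ e ∈ s, X ^ M ∣ F e - 1) : X ^ M ∣ (∏ e ∈ s, F e) - 1 :=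
  Finset.prod_induction F (fun f => X ^ M ∣ f - 1)
    (fun _ _ => dvd_sub_one_mul) (by simp) h

lemma coeff_mul_congr {K E : PowerSeries ℝ} {N : ℕ} (h : X ^ (N + 1) ∣ E - 1) :
    coeff (R := ℝ) N (K * E) = coeff (R := ℝ) N K := by
  have h2 : X ^ (N + 1) ∣ K * E - K := by
    have := h.mul_left K
    rwa [mul_sub, mul_one] at this
  obtain ⟨g, hg⟩ := h2
  have h3 : coeff (R := ℝ) N (K * E - K) = 0 := by
    rw [hg, coeff_X_pow_mul', if_neg (by omega)]
  have h4 := map_sub (coeff (R := ℝ) N) (K * E) K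
  rw [h3] at h4
  linarith

lemma dvd_vv {x : ℝ} {M e : ℕ} (h : M ≤ e) : X ^ M ∣ vv x e - 1 := by
  have h1 : vv x e - 1 = -(C (R := ℝ) x * X ^ e) := by rw [vv]; ring
  rw [h1]
  exact dvd_neg.mpr ((pow_dvd_pow X h).mul_left _)

lemma dvd_uu {y : ℝ} {M e : ℕ} (h : M ≤ e) : X ^ M ∣ uu y e - 1 := by
  have h1 : uu y e - 1 = C (R := ℝ) y * X ^ e := by rw [uu]; ring
  rw [h1]
  exact (pow_dvd_pow X h).mul_left _

end CoeffsNonnegFAux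

open CoeffsNonnegFAux

/-- Let `1 ≤ a < b ≤ m` with `(a, b) ≠ (1, 2)`, and `x ≥ 1`, `y ≥ 0`. Then all
Taylor coefficients about `q = 0` of
`f(q) = (1 − q^{b−a}) · ∏_{j≥1} (1 + y q^j)/(1 − x q^j)
          · ∏_{j≥0} (1 − x q^{a+jm})(1 − x q^{b+jm})/((1 + y q^{a+jm})(1 + y q^{b+jm}))`
are non-negative.  The coefficient of `q^N` of the infinite product is captured
faithfully by the finite truncation below, since every omitted factor is of the
form `1 + O(q^{N+1})` and hence does not affect the coefficients up to `q^N`. -/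
theorem coeffs_nonneg_f (a b m : ℕ) (ha : 1 ≤ a) (hab : a < b) (hbm : b ≤ m)
    (hne : ¬(a = 1 ∧ b = 2)) (x y : ℝ) (hx : 1 ≤ x) (hy : 0 ≤ y) (N : ℕ) :
    0 ≤ coeff (R := ℝ) N ((1 - X ^ (b - a)) *
      (∏ j ∈ Finset.range (N + 1),
        (1 + C (R := ℝ) y * X ^ (j + 1)) * (1 - C (R := ℝ) x * X ^ (j + 1))⁻¹) *
      (∏ j ∈ Finset.range (N + 1),
        (1 - C (R := ℝ) x * X ^ (a + j * m)) * (1 - C (R := ℝ) x * X ^ (b + j * m)) *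
          (1 + C (R := ℝ) y * X ^ (a + j * m))⁻¹ * (1 + C (R := ℝ) y * X ^ (b + j * m))⁻¹)) := by
  classical
  have hm : 0 < m := by omega
  have hx0 : (0:ℝ) ≤ x := le_trans zero_le_one hx
  set d := b - a with hdd
  have hd : 0 < d := by omega
  set c : ℕ := if a = 1 then d else 1 with hcdef
  have hc : 0 < c := by rw [hcdef]; split_ifs <;> omega
  have hcd : c ∣ d := by rw [hcdef]; split_ifs; exacts [dvd_refl d, one_dvd d]
  have hcled : c ≤ d := Nat.le_of_dvd hd hcd
  have hcS : ∀ j : ℕ, a + j * m ≠ c ∧ b + j * m ≠ c := by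
    intro j
    have hjm : j = 0 ∨ m ≤ j * m := by
      rcases Nat.eq_zero_or_pos j with hj | hj
      · exact Or.inl hj
      · exact Or.inr (Nat.le_mul_of_pos_left m hj)
    constructor
    · rw [hcdef]
      split_ifs with h1
      · rcases hjm with hj | hj
        · subst hj; omega
        · omega
      · omega
    · omega
  -- index sets
  set I : Finset ℕ := (Finset.range (N + 1)).image (· + 1) with hI
  set Sa : Finset ℕ := (Finset.range (N + 1)).image (fun j => a + j * m) with hSa
  set Sb : Finset ℕ := (Finset.range (N + 1)).image (fun j => b + j * m) with hSb
  set S := Sa ∪ Sb with hS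
  have hmemI : ∀ e, e ∈ I ↔ 1 ≤ e ∧ e ≤ N + 1 := by
    intro e
    rw [hI, Finset.mem_image]
    constructor
    · rintro ⟨j, hj, rfl⟩
      rw [Finset.mem_range] at hj
      refine ⟨by omega, by omega⟩
    · rintro ⟨h1, h2⟩
      exact ⟨e - 1, Finset.mem_range.mpr (by omega), by omega⟩
  have hdisj : Disjoint Sa Sb := by
    rw [Finset.disjoint_left]
    rintro e hea heb
    rw [hSa, Finset.mem_image] at hea
    rw [hSb, Finset.mem_image] at heb
    obtain ⟨j, _, hj⟩ := hea
    obtain ⟨k, _, hk⟩ := heb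
    have heq : a + j * m = b + k * m := by omega
    have hkj : k < j := by
      by_contra hkj
      push_neg at hkj
      have := Nat.mul_le_mul_right m hkj
      omega
    have h2 : k + 1 ≤ j := hkj
    have h3 : (k + 1) * m ≤ j * m := Nat.mul_le_mul_right m h2
    rw [Nat.succ_mul] at h3
    omega
  have hainj : ∀ p ∈ Finset.range (N + 1), ∀ q ∈ Finset.range (N + 1),
      a + p * m = a + q * m → p = q := by
    intro p _ q _ h
    exact Nat.eq_of_mul_eq_mul_right hm (by omega)
  have hbinj : ∀ p ∈ Finset.range (N + 1), ∀ q ∈ Finset.range (N + 1),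
      b + p * m = b + q * m → p = q := by
    intro p _ q _ h
    exact Nat.eq_of_mul_eq_mul_right hm (by omega)
  have hP1 : (∏ j ∈ Finset.range (N + 1),
        (1 + C (R := ℝ) y * X ^ (j + 1)) * (1 - C (R := ℝ) x * X ^ (j + 1))⁻¹)
      = ∏ e ∈ I, uu y e * (vv x e)⁻¹ := by
    rw [hI, Finset.prod_image (fun p _ q _ h => by omega)]
    rfl
  have hP2 : (∏ j ∈ Finset.range (N + 1),
        (1 - C (R := ℝ) x * X ^ (a + j * m)) * (1 - C (R := ℝ) x * X ^ (b + j * m)) *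
          (1 + C (R := ℝ) y * X ^ (a + j * m))⁻¹ * (1 + C (R := ℝ) y * X ^ (b + j * m))⁻¹)
      = ∏ e ∈ S, vv x e * (uu y e)⁻¹ := by
    rw [hS, Finset.prod_union hdisj, hSa, hSb, Finset.prod_image hainj,
      Finset.prod_image hbinj, ← Finset.prod_mul_distrib]
    refine Finset.prod_congr rfl fun j _ => ?_
    simp only [uu, vv]
    ring
  rw [hP1, hP2, mul_assoc]
  have hcancel : (∏ e ∈ I ∩ S, uu y e * (vv x e)⁻¹) *
      (∏ e ∈ I ∩ S, vv x e * (uu y e)⁻¹) = 1 := by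
    rw [← Finset.prod_mul_distrib]
    refine Finset.prod_eq_one fun e he => ?_
    have he1 : 0 < e := by
      have := ((hmemI e).mp (Finset.mem_of_mem_inter_left he)).1
      omega
    have hvu : (vv x e)⁻¹ * vv x e = 1 :=
      PowerSeries.inv_mul_cancel _ (by rw [constantCoeff_vv x he1]; norm_num)
    have huu : uu y e * (uu y e)⁻¹ = 1 :=
      PowerSeries.mul_inv_cancel _ (by rw [constantCoeff_uu y he1]; norm_num)
    calc uu y e * (vv x e)⁻¹ * (vv x e * (uu y e)⁻¹)
        = uu y e * ((vv x e)⁻¹ * vv x e) * (uu y e)⁻¹ := by ring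
      _ = 1 := by rw [hvu, mul_one, huu]
  have hsplit : (∏ e ∈ I, uu y e * (vv x e)⁻¹) * (∏ e ∈ S, vv x e * (uu y e)⁻¹)
      = (∏ e ∈ I \ S, uu y e * (vv x e)⁻¹) * (∏ e ∈ S \ I, vv x e * (uu y e)⁻¹) := by
    rw [← Finset.prod_inter_mul_prod_diff I S (fun e => uu y e * (vv x e)⁻¹),
      ← Finset.prod_inter_mul_prod_diff S I (fun e => vv x e * (uu y e)⁻¹),
      Finset.inter_comm S I, mul_mul_mul_comm, hcancel, one_mul]
  rw [hsplit]
  have hE1 : X ^ (N + 1) ∣ (∏ e ∈ S \ I, vv x e * (uu y e)⁻¹) - 1 := by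
    refine dvd_sub_one_prod fun e he => ?_
    obtain ⟨heS, heI⟩ := Finset.mem_sdiff.mp he
    have he1 : 1 ≤ e := by
      rw [hS, Finset.mem_union] at heS
      rcases heS with h | h
      · rw [hSa, Finset.mem_image] at h
        obtain ⟨j, _, hj⟩ := h
        omega
      · rw [hSb, Finset.mem_image] at h
        obtain ⟨j, _, hj⟩ := h
        omega
    have heN : N + 1 ≤ e := by
      by_contra hlt
      push_neg at hlt
      exact heI ((hmemI e).mpr ⟨he1, by omega⟩)
    exact dvd_sub_one_mul (dvd_vv heN)
      (dvd_sub_one_inv (dvd_uu heN) (by rw [constantCoeff_uu y (by omega)]; norm_num))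
  have hNNprod : ∀ s : Finset ℕ, (∀ e ∈ s, 0 < e) →
      NN (∏ e ∈ s, uu y e * (vv x e)⁻¹) := by
    intro s hs
    refine Finset.prod_induction _ NN (fun _ _ => NN.mul) NN_one fun e he => ?_
    exact (NN_uu hy e).mul (NN_vv_inv hx0 (hs e he))
  by_cases hdN : d ≤ N
  · have hcI : c ∈ I := (hmemI c).mpr ⟨hc, by omega⟩
    have hcS' : c ∉ S := by
      rw [hS, Finset.mem_union]
      rintro (h | h)
      · rw [hSa, Finset.mem_image] at h
        obtain ⟨j, _, hj⟩ := h
        exact (hcS j).1 hj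
      · rw [hSb, Finset.mem_image] at h
        obtain ⟨j, _, hj⟩ := h
        exact (hcS j).2 hj
    have hmem : c ∈ I \ S := Finset.mem_sdiff.mpr ⟨hcI, hcS'⟩
    rw [← Finset.mul_prod_erase (I \ S) (fun e => uu y e * (vv x e)⁻¹) hmem]
    have hre : (1 - X ^ d) * ((uu y c * (vv x c)⁻¹ *
          ∏ e ∈ (I \ S).erase c, uu y e * (vv x e)⁻¹) *
        (∏ e ∈ S \ I, vv x e * (uu y e)⁻¹))
        = (((1 - X ^ d) * (vv x c)⁻¹) *
            (uu y c * ∏ e ∈ (I \ S).erase c, uu y e * (vv x e)⁻¹)) *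
          (∏ e ∈ S \ I, vv x e * (uu y e)⁻¹) := by ring
    rw [hre, coeff_mul_congr hE1]
    refine ((NN_key hx hc hcd).mul ((NN_uu hy c).mul (hNNprod _ fun e he => ?_))) N
    have := ((hmemI e).mp (Finset.mem_sdiff.mp (Finset.mem_of_mem_erase he)).1).1
    omega
  · have hdX : X ^ (N + 1) ∣ (1 - X ^ d : PowerSeries ℝ) - 1 := by
      have h1 : (1 - X ^ d : PowerSeries ℝ) - 1 = -(X ^ d) := by ring
      rw [h1]
      exact dvd_neg.mpr (pow_dvd_pow X (by omega))
    have hre : (1 - X ^ d) * ((∏ e ∈ I \ S, uu y e * (vv x e)⁻¹) *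
          (∏ e ∈ S \ I, vv x e * (uu y e)⁻¹))
        = (∏ e ∈ I \ S, uu y e * (vv x e)⁻¹) *
          ((1 - X ^ d) * ∏ e ∈ S \ I, vv x e * (uu y e)⁻¹) := by ring
    rw [hre, coeff_mul_congr (dvd_sub_one_mul hdX hE1)]
    refine hNNprod _ (fun e he => ?_) N
    have := ((hmemI e).mp (Finset.mem_sdiff.mp he).1).1
    omega
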